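/- The integral (1/(2√π)) ∫₀¹ (−log x)·c(x)·(x(1−x))^{−3/2} dx equals √π/2, where c(x) = x²(3−2x). -/

import Mathlib

open Real

/-- The limiting split function `c(x) = x²(3-2x)`. -/
def cfun (x : ℝ) : ℝ := x ^ 2 * (3 - 2 * x)

noncomputable def Gfun (x : ℝ) : ℝ :=
  -2 * Real.log x * (x * Real.sqrt x) / Real.sqrt (1 - x)
    + 2 * Real.arcsin (Real.sqrt x) - 2 * (Real.sqrt x * Real.sqrt (1 - x))

/-- rpow rewrite of the integrand on (0,1). -/
lemma key_rpow {x : ℝ} (h0 : 0 < x) (h1 : x < 1) :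
    (x * (1 - x)) ^ (-(3 / 2) : ℝ)
      = 1 / ((x * (1 - x)) * (Real.sqrt x * Real.sqrt (1 - x))) := by
  have hxt : 0 < x * (1 - x) := mul_pos h0 (by linarith)
  have h32 : (x * (1 - x)) ^ ((3:ℝ) / 2)
      = (x * (1 - x)) * (Real.sqrt x * Real.sqrt (1 - x)) := by
    have : (x * (1 - x)) ^ ((3:ℝ)/2)
        = (x * (1 - x)) ^ (1:ℝ) * (x * (1 - x)) ^ ((1:ℝ)/2) := by
      rw [← Real.rpow_add hxt]; norm_num
    rw [this, Real.rpow_one, ← Real.sqrt_eq_rpow, Real.sqrt_mul h0.le]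
  rw [show (-(3/2) : ℝ) = -((3:ℝ)/2) by norm_num, Real.rpow_neg hxt.le, h32,
    one_div]

lemma hasDerivAt_Gfun {x : ℝ} (h0 : 0 < x) (h1 : x < 1) :
    HasDerivAt Gfun ((-Real.log x) * cfun x * (x * (1 - x)) ^ (-(3 / 2) : ℝ)) x := by
  have h1x : (0:ℝ) < 1 - x := by linarith
  set s := Real.sqrt x with hs_def
  set t := Real.sqrt (1 - x) with ht_def
  have hs : 0 < s := Real.sqrt_pos.2 h0
  have ht : 0 < t := Real.sqrt_pos.2 h1x
  have hsx : s ^ 2 = x := Real.sq_sqrt h0.le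
  have htx : t ^ 2 = 1 - x := Real.sq_sqrt h1x.le
  have hd1 : HasDerivAt (fun y => Real.sqrt y) (1 / (2 * s)) x :=
    Real.hasDerivAt_sqrt h0.ne'
  have hd2 : HasDerivAt (fun y => Real.sqrt (1 - y)) (-(1 / (2 * t))) x := by
    have := (Real.hasDerivAt_sqrt h1x.ne').comp x ((hasDerivAt_id x).const_sub 1)
    simpa [ht_def, Function.comp_def] using this
  have hdA : HasDerivAt (fun y => y * Real.sqrt y) (1 * s + x * (1 / (2 * s))) x :=
    (hasDerivAt_id x).mul hd1
  have hdB : HasDerivAt (fun y => -2 * Real.log y * (y * Real.sqrt y))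
      ((-2 * x⁻¹) * (x * s) + (-2 * Real.log x) * (1 * s + x * (1 / (2 * s)))) x := by
    exact ((Real.hasDerivAt_log h0.ne').const_mul (-2)).mul hdA
  have hdC : HasDerivAt (fun y => -2 * Real.log y * (y * Real.sqrt y) / Real.sqrt (1 - y))
      ((((-2 * x⁻¹) * (x * s) + (-2 * Real.log x) * (1 * s + x * (1 / (2 * s)))) * t
        - (-2 * Real.log x * (x * s)) * (-(1 / (2 * t)))) / t ^ 2) x :=
    hdB.div hd2 ht.ne'
  have hsne1 : s ≠ -1 := by linarith
  have hsne2 : s ≠ 1 := by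
    intro h
    rw [h] at hsx; norm_num at hsx; linarith
  have hdArc : HasDerivAt (fun y => Real.arcsin (Real.sqrt y))
      (1 / Real.sqrt (1 - s ^ 2) * (1 / (2 * s))) x :=
    (Real.hasDerivAt_arcsin hsne1 hsne2).comp x hd1
  have hdD : HasDerivAt (fun y => 2 * Real.arcsin (Real.sqrt y))
      (2 * (1 / Real.sqrt (1 - s ^ 2) * (1 / (2 * s)))) x := hdArc.const_mul 2
  have hdE : HasDerivAt (fun y => 2 * (Real.sqrt y * Real.sqrt (1 - y)))
      (2 * ((1 / (2 * s)) * t + s * (-(1 / (2 * t))))) x := (hd1.mul hd2).const_mul 2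
  have hG := (hdC.add hdD).sub hdE
  refine hG.congr_deriv ?_
  symm
  rw [key_rpow h0 h1, hsx]
  unfold cfun
  rw [← htx, ← hsx]
  have hx0 : s ^ 2 ≠ 0 := by positivity
  have hst1 : s ^ 2 + t ^ 2 = 1 := by rw [hsx, htx]; ring
  field_simp
  rw [Real.sqrt_sq hs.le, Real.sqrt_sq ht.le]
  linear_combination (3 * Real.log (s ^ 2) * s ^ 3 * t + s * t ^ 3) * hst1

/-- sqrt form of the integrand. -/
lemma integrand_eq {x : ℝ} (h0 : 0 < x) (h1 : x < 1) :
    (-Real.log x) * cfun x * (x * (1 - x)) ^ (-(3 / 2) : ℝ)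
      = (-Real.log x) * (3 - 2 * x) * Real.sqrt x / ((1 - x) * Real.sqrt (1 - x)) := by
  have h1x : (0:ℝ) < 1 - x := by linarith
  have hs : 0 < Real.sqrt x := Real.sqrt_pos.2 h0
  have ht : 0 < Real.sqrt (1 - x) := Real.sqrt_pos.2 h1x
  have hsx : Real.sqrt x ^ 2 = x := Real.sq_sqrt h0.le
  rw [key_rpow h0 h1]
  unfold cfun
  field_simp
  linear_combination
    (Real.log x * (3 - x * 2)) * hsx

lemma integrand_nonneg {x : ℝ} (h0 : 0 < x) (h1 : x ≤ 1) :
    0 ≤ (-Real.log x) * cfun x * (x * (1 - x)) ^ (-(3 / 2) : ℝ) := by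
  have hl : 0 ≤ -Real.log x := by
    simpa using Real.log_nonpos h0.le h1
  have hc : 0 ≤ cfun x := by
    unfold cfun; nlinarith
  have hr : 0 ≤ (x * (1 - x)) ^ (-(3 / 2) : ℝ) :=
    Real.rpow_nonneg (by nlinarith) _
  positivity

lemma neglog_le {x : ℝ} (h0 : 0 < x) : -Real.log x ≤ 1 / x - 1 := by
  have := Real.log_le_sub_one_of_pos (show 0 < x⁻¹ by positivity)
  rw [Real.log_inv] at this
  rw [one_div]
  linarith

lemma neglog_sqrt_le {x : ℝ} (h0 : 0 < x) : -Real.log x ≤ 2 / Real.sqrt x := by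
  have hs : 0 < Real.sqrt x := Real.sqrt_pos.2 h0
  have h := neglog_le hs
  rw [Real.log_sqrt h0.le] at h
  have h2 : (0:ℝ) < 1 / Real.sqrt x := by positivity
  rw [one_div] at h
  rw [div_eq_mul_inv]
  linarith

lemma boundA {x : ℝ} (hx : x ∈ Set.Ioc (0:ℝ) (1/2)) :
    ‖(-Real.log x) * cfun x * (x * (1 - x)) ^ (-(3 / 2) : ℝ)‖ ≤ 24 := by
  obtain ⟨h0, h12⟩ := hx
  have h1 : x < 1 := by linarith
  have h1x : (0:ℝ) < 1 - x := by linarith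
  have hs : 0 < Real.sqrt x := Real.sqrt_pos.2 h0
  have ht : 0 < Real.sqrt (1 - x) := Real.sqrt_pos.2 h1x
  rw [Real.norm_eq_abs, abs_of_nonneg (integrand_nonneg h0 h1.le), integrand_eq h0 h1]
  have hlog : (-Real.log x) * Real.sqrt x ≤ 2 := by
    have h := neglog_sqrt_le h0
    have hl0 : 0 ≤ -Real.log x := by simpa using Real.log_nonpos h0.le h1.le
    calc (-Real.log x) * Real.sqrt x ≤ (2 / Real.sqrt x) * Real.sqrt x :=
          mul_le_mul_of_nonneg_right h hs.le
      _ = 2 := by field_simp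
  have hnum : (-Real.log x) * (3 - 2 * x) * Real.sqrt x ≤ 6 := by
    have hl0 : 0 ≤ -Real.log x := by simpa using Real.log_nonpos h0.le h1.le
    nlinarith [hlog, hs, mul_nonneg hl0 hs.le]
  have hden : (1:ℝ)/4 ≤ (1 - x) * Real.sqrt (1 - x) := by
    have h2 : (1:ℝ)/2 ≤ 1 - x := by linarith
    have h3 : (1:ℝ)/2 ≤ Real.sqrt (1 - x) := by
      have := Real.sq_sqrt h1x.le
      nlinarith [ht]
    nlinarith
  rw [div_le_iff₀ (by positivity)]
  nlinarith [hnum, hden]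

lemma boundB {x : ℝ} (hx : x ∈ Set.Ioc (1/2:ℝ) 1) :
    ‖(-Real.log x) * cfun x * (x * (1 - x)) ^ (-(3 / 2) : ℝ)‖
      ≤ ‖4 * (1 - x) ^ (-(1/2) : ℝ)‖ := by
  obtain ⟨h12, h1⟩ := hx
  have h0 : (0:ℝ) < x := by linarith
  rcases eq_or_lt_of_le h1 with rfl | h1'
  · simp
  have h1x : (0:ℝ) < 1 - x := by linarith
  have hs : 0 < Real.sqrt x := Real.sqrt_pos.2 h0
  have ht : 0 < Real.sqrt (1 - x) := Real.sqrt_pos.2 h1x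
  have htx : Real.sqrt (1 - x) ^ 2 = 1 - x := Real.sq_sqrt h1x.le
  have hrw : (1 - x) ^ (-(1/2) : ℝ) = 1 / Real.sqrt (1 - x) := by
    rw [Real.rpow_neg h1x.le, ← Real.sqrt_eq_rpow, one_div]
  rw [Real.norm_eq_abs, Real.norm_eq_abs,
    abs_of_nonneg (integrand_nonneg h0 h1'.le), integrand_eq h0 h1', hrw,
    abs_of_nonneg (by positivity)]
  have hl : -Real.log x ≤ 2 * (1 - x) := by
    have := neglog_le h0
    have hxi : 1 / x - 1 ≤ 2 * (1 - x) := by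
      rw [div_sub' h0.ne', div_le_iff₀ h0]
      nlinarith
    linarith
  have hsx : Real.sqrt x ≤ 1 := by
    have := Real.sq_sqrt h0.le
    nlinarith [hs]
  have hl0 : 0 ≤ -Real.log x := by simpa using Real.log_nonpos h0.le h1'.le
  have hA : (-Real.log x) * (3 - 2 * x) * Real.sqrt x ≤ 4 * (1 - x) := by
    nlinarith [mul_nonneg hl0 hs.le, hl, hsx, hs]
  rw [mul_one_div, div_le_div_iff₀ (by positivity) ht]
  nlinarith [mul_nonneg (sub_nonneg.2 hA) ht.le]

lemma contOn_integrand :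
    ContinuousOn (fun x : ℝ => (-Real.log x) * cfun x * (x * (1 - x)) ^ (-(3 / 2) : ℝ))
      (Set.Ioo (0:ℝ) 1) := by
  apply ContinuousOn.mul
  · apply ContinuousOn.mul
    · exact (Real.continuousOn_log.mono
        (fun x hx => by simp [ne_of_gt hx.1])).neg
    · exact (by unfold cfun; fun_prop : Continuous cfun).continuousOn
  · apply ContinuousOn.rpow_const
    · fun_prop
    · intro x hx
      exact Or.inl (by nlinarith [hx.1, hx.2] : x * (1 - x) ≠ 0)

lemma aesm_integrand {s : Set ℝ} (hs : MeasurableSet s) (hsub : s ⊆ Set.Ioo (0:ℝ) 1) :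
    MeasureTheory.AEStronglyMeasurable
      (fun x : ℝ => (-Real.log x) * cfun x * (x * (1 - x)) ^ (-(3 / 2) : ℝ))
      (MeasureTheory.volume.restrict s) :=
  (contOn_integrand.mono hsub).aestronglyMeasurable hs

theorem integral_log_cfun :
    (1 / (2 * Real.sqrt π)) *
        ∫ x in Set.Ioo (0 : ℝ) 1,
          (-Real.log x) * cfun x * (x * (1 - x)) ^ (-(3 / 2) : ℝ) =
      Real.sqrt π / 2 := by
  set g : ℝ → ℝ := fun x => (-Real.log x) * cfun x * (x * (1 - x)) ^ (-(3 / 2) : ℝ) with hg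
  -- integrability
  have hIA : IntervalIntegrable g MeasureTheory.volume 0 (1/2) := by
    apply IntervalIntegrable.mono_fun' (g := fun _ => (24:ℝ)) intervalIntegrable_const
    · rw [Set.uIoc_of_le (by norm_num : (0:ℝ) ≤ 1/2)]
      exact aesm_integrand measurableSet_Ioc
        (fun x hx => ⟨hx.1, by linarith [hx.2]⟩)
    · rw [Set.uIoc_of_le (by norm_num : (0:ℝ) ≤ 1/2)]
      refine (MeasureTheory.ae_restrict_iff' measurableSet_Ioc).2 (MeasureTheory.ae_of_all _ ?_)
      exact fun x hx => boundA hx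
  have hIB : IntervalIntegrable g MeasureTheory.volume (1/2) 1 := by
    have hm : IntervalIntegrable (fun x : ℝ => 4 * (1 - x) ^ (-(1/2) : ℝ))
        MeasureTheory.volume (1/2) 1 := by
      have h := (intervalIntegral.intervalIntegrable_rpow'
        (a := 1/2) (b := 0) (r := -(1/2)) (by norm_num)).comp_sub_left 1
      norm_num at h
      exact h.const_mul 4
    apply hm.mono_fun
    · rw [Set.uIoc_of_le (by norm_num : (1/2:ℝ) ≤ 1)]
      rw [← MeasureTheory.Measure.restrict_congr_set MeasureTheory.Ioo_ae_eq_Ioc]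
      exact aesm_integrand measurableSet_Ioo
        (fun x hx => ⟨by linarith [hx.1], hx.2⟩)
    rw [Set.uIoc_of_le (by norm_num : (1/2:ℝ) ≤ 1)]
    refine (MeasureTheory.ae_restrict_iff' measurableSet_Ioc).2 (MeasureTheory.ae_of_all _ ?_)
    exact fun x hx => boundB hx
  have hint : IntervalIntegrable g MeasureTheory.volume 0 1 := hIA.trans hIB
  -- derivative
  have hderiv : ∀ x ∈ Set.Ioo (0:ℝ) 1, HasDerivAt Gfun (g x) x :=
    fun x hx => hasDerivAt_Gfun hx.1 hx.2
  -- limit at 0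
  have hG0 : Filter.Tendsto Gfun (nhdsWithin 0 (Set.Ioi 0)) (nhds 0) := by
    have t1 : Filter.Tendsto (fun x : ℝ => -2 * Real.log x * (x * Real.sqrt x) / Real.sqrt (1 - x))
        (nhdsWithin 0 (Set.Ioi 0)) (nhds 0) := by
      have A := tendsto_log_mul_rpow_nhdsGT_zero (show (0:ℝ) < 3/2 by norm_num)
      have B : Filter.Tendsto (fun x : ℝ => -2 / Real.sqrt (1 - x))
          (nhdsWithin 0 (Set.Ioi 0)) (nhds (-2)) := by
        have hc : Continuous (fun x : ℝ => Real.sqrt (1 - x)) := by fun_prop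
        have h := (tendsto_const_nhds (x := (-2:ℝ))).div (hc.tendsto 0)
          (by norm_num [Real.sqrt_one])
        rw [show (-2:ℝ) / Real.sqrt (1 - 0) = -2 by norm_num [Real.sqrt_one]] at h
        exact h.mono_left nhdsWithin_le_nhds
      have hAB := (A.mul B)
      rw [show (0:ℝ) * -2 = 0 by norm_num] at hAB
      refine hAB.congr' ?_
      filter_upwards [self_mem_nhdsWithin] with x (hx : 0 < x)
      have hxr : x ^ ((3:ℝ)/2) = x * Real.sqrt x := by
        rw [show ((3:ℝ)/2) = (1:ℝ) + 1/2 by norm_num, Real.rpow_add hx, Real.rpow_one,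
          ← Real.sqrt_eq_rpow]
      rw [hxr]
      ring
    have t2 : Filter.Tendsto (fun x : ℝ => 2 * Real.arcsin (Real.sqrt x))
        (nhdsWithin 0 (Set.Ioi 0)) (nhds 0) := by
      have hc : Continuous (fun x : ℝ => 2 * Real.arcsin (Real.sqrt x)) :=
        continuous_const.mul (Real.continuous_arcsin.comp Real.continuous_sqrt)
      have h := hc.tendsto 0
      rw [show 2 * Real.arcsin (Real.sqrt 0) = 0 by
        rw [Real.sqrt_zero, Real.arcsin_zero]; ring] at h
      exact h.mono_left nhdsWithin_le_nhds
    have t3 : Filter.Tendsto (fun x : ℝ => 2 * (Real.sqrt x * Real.sqrt (1 - x)))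
        (nhdsWithin 0 (Set.Ioi 0)) (nhds 0) := by
      have hc : Continuous (fun x : ℝ => 2 * (Real.sqrt x * Real.sqrt (1 - x))) := by fun_prop
      have h := hc.tendsto 0
      rw [show 2 * (Real.sqrt 0 * Real.sqrt (1 - 0)) = 0 by
        rw [Real.sqrt_zero]; ring] at h
      exact h.mono_left nhdsWithin_le_nhds
    have h := (t1.add t2).sub t3
    rw [show (0:ℝ) + 0 - 0 = 0 by norm_num] at h
    exact h
  -- limit at 1
  have hG1 : Filter.Tendsto Gfun (nhdsWithin 1 (Set.Iio 1)) (nhds π) := by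
    have t1 : Filter.Tendsto (fun x : ℝ => -2 * Real.log x * (x * Real.sqrt x) / Real.sqrt (1 - x))
        (nhdsWithin 1 (Set.Iio 1)) (nhds 0) := by
      refine squeeze_zero_norm' (a := fun x : ℝ => 4 * Real.sqrt (1 - x)) ?_ ?_
      · filter_upwards [Ioo_mem_nhdsLT_of_mem (show (1:ℝ) ∈ Set.Ioc (1/2:ℝ) 1 by norm_num)]
          with x hx
        obtain ⟨h12, h1⟩ := hx
        have h0 : (0:ℝ) < x := by linarith
        have h1x : (0:ℝ) < 1 - x := by linarith
        have hs : 0 < Real.sqrt x := Real.sqrt_pos.2 h0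
        have ht : 0 < Real.sqrt (1 - x) := Real.sqrt_pos.2 h1x
        have htx : Real.sqrt (1 - x) ^ 2 = 1 - x := Real.sq_sqrt h1x.le
        have hl0 : 0 ≤ -Real.log x := by simpa using Real.log_nonpos h0.le h1.le
        have hsx : Real.sqrt x ≤ 1 := by
          have := Real.sq_sqrt h0.le
          nlinarith [hs]
        have hl : -Real.log x ≤ 2 * (1 - x) := by
          have := neglog_le h0
          have hxi : 1 / x - 1 ≤ 2 * (1 - x) := by
            rw [div_sub' h0.ne', div_le_iff₀ h0]
            nlinarith
          linarith
        have hnn : 0 ≤ -2 * Real.log x * (x * Real.sqrt x) :=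
          mul_nonneg (by linarith) (by positivity)
        rw [Real.norm_eq_abs, abs_div, abs_of_nonneg hnn, abs_of_nonneg ht.le,
          div_le_iff₀ ht]
        have hxs : x * Real.sqrt x ≤ 1 := by nlinarith [hs]
        nlinarith [mul_nonneg hnn ht.le, htx, mul_nonneg (mul_nonneg hl0 h1x.le) ht.le,
          mul_nonneg hl0 (mul_nonneg h0.le hs.le)]
      · have hc : Continuous (fun x : ℝ => 4 * Real.sqrt (1 - x)) := by fun_prop
        have h := hc.tendsto 1
        rw [show 4 * Real.sqrt (1 - 1) = 0 by norm_num [Real.sqrt_zero]] at h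
        exact h.mono_left nhdsWithin_le_nhds
    have t2 : Filter.Tendsto (fun x : ℝ => 2 * Real.arcsin (Real.sqrt x))
        (nhdsWithin 1 (Set.Iio 1)) (nhds π) := by
      have hc : Continuous (fun x : ℝ => 2 * Real.arcsin (Real.sqrt x)) :=
        continuous_const.mul (Real.continuous_arcsin.comp Real.continuous_sqrt)
      have h := hc.tendsto 1
      rw [show 2 * Real.arcsin (Real.sqrt 1) = π by
        rw [Real.sqrt_one, Real.arcsin_one]; ring] at h
      exact h.mono_left nhdsWithin_le_nhds
    have t3 : Filter.Tendsto (fun x : ℝ => 2 * (Real.sqrt x * Real.sqrt (1 - x)))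
        (nhdsWithin 1 (Set.Iio 1)) (nhds 0) := by
      have hc : Continuous (fun x : ℝ => 2 * (Real.sqrt x * Real.sqrt (1 - x))) := by fun_prop
      have h := hc.tendsto 1
      rw [show 2 * (Real.sqrt 1 * Real.sqrt (1 - 1)) = 0 by
        norm_num [Real.sqrt_zero]] at h
      exact h.mono_left nhdsWithin_le_nhds
    have h := (t1.add t2).sub t3
    rw [show (0:ℝ) + π - 0 = π by ring] at h
    exact h
  -- FTC
  have hI : ∫ x in Set.Ioo (0:ℝ) 1, g x = π := by
    rw [← MeasureTheory.integral_Ioc_eq_integral_Ioo,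
      ← intervalIntegral.integral_of_le (by norm_num : (0:ℝ) ≤ 1)]
    rw [intervalIntegral.integral_eq_sub_of_hasDerivAt_of_tendsto (by norm_num) hderiv hint
      hG0 hG1]
    ring
  rw [hI]
  have h : Real.sqrt π * Real.sqrt π = π := Real.mul_self_sqrt Real.pi_pos.le
  have hs : Real.sqrt π ≠ 0 := by positivity
  field_simp
  linarith [Real.sq_sqrt Real.pi_pos.le, h]
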